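/- Let w̃₁(X) = exp(λ̃₁ᵀU(X)) / E[e(X)exp(λ̃₁ᵀU(X))], where λ̃₁ satisfies the balance equations E[e(X)exp(λ̃₁ᵀU(X))(u_k(X) − m_k)] = 0 for k=1,...,K with m_k = E[u_k(X)]. If the conditional mean β₁(X) = E[Y(1)|X] is an affine function of u_1(X),...,u_K(X), then E[e(X)·w̃₁(X)·β₁(X)] = E[β₁(X)] = E[Y(1)]. -/

import Mathlib

open MeasureTheory ProbabilityTheory Real
open scoped BigOperators

/-- If `β₁(X) = E[Y(1)|X]` is affine in the balanced functions, the limiting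
Kullback-Leibler weights recover `E[Y(1)]`: `E[e(X) w̃₁(X) β₁(X)] = E[β₁(X)] = E[Y(1)]`. -/
theorem stmt_8
    {Ω : Type*} {mΩ : MeasurableSpace Ω} {μ : Measure Ω} [IsProbabilityMeasure μ]
    {p K : ℕ} (X : Ω → (Fin p → ℝ)) (hX : Measurable X)
    (e : (Fin p → ℝ) → ℝ) (he : Measurable e)
    (hescore : ∀ᵐ ω ∂μ, 0 < e (X ω) ∧ e (X ω) < 1)
    (u : Fin K → (Fin p → ℝ) → ℝ) (hu : ∀ k, Measurable (u k))
    (hubd : ∃ B : ℝ, ∀ k x', |u k x'| ≤ B)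
    (m : Fin K → ℝ) (hm : ∀ k, m k = ∫ ω, u k (X ω) ∂μ)
    (lam : Fin K → ℝ)
    -- the balance equations for `λ̃₁`
    (hbal : ∀ k, (∫ ω, e (X ω) * exp (∑ j, lam j * u j (X ω)) * (u k (X ω) - m k) ∂μ) = 0)
    -- the limiting weight function
    (wt : (Fin p → ℝ) → ℝ)
    (hwt : ∀ x', wt x' = exp (∑ j, lam j * u j x')
            / ∫ ω, e (X ω) * exp (∑ j, lam j * u j (X ω)) ∂μ)
    -- outcome and conditional mean: `β₁(X) = E[Y(1)|X]`
    (Y1 : Ω → ℝ) (hY1 : Integrable Y1 μ)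
    (b1 : (Fin p → ℝ) → ℝ)
    (hb1 : μ[Y1 | MeasurableSpace.comap X inferInstance] =ᵐ[μ] fun ω => b1 (X ω))
    (hb1int : Integrable (fun ω => b1 (X ω)) μ)
    -- `β₁` is affine in `u_1, …, u_K`
    (a0 : ℝ) (a : Fin K → ℝ)
    (haff : ∀ᵐ ω ∂μ, b1 (X ω) = a0 + ∑ k, a k * u k (X ω)) :
    (∫ ω, e (X ω) * wt (X ω) * b1 (X ω) ∂μ) = (∫ ω, b1 (X ω) ∂μ) ∧
      (∫ ω, b1 (X ω) ∂μ) = ∫ ω, Y1 ω ∂μ := by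
  obtain ⟨B, hB⟩ := hubd
  -- notation
  set g : Ω → ℝ := fun ω => e (X ω) * exp (∑ j, lam j * u j (X ω)) with hg
  set Z : ℝ := ∫ ω, g ω ∂μ with hZ
  have hSmeas : Measurable fun ω => ∑ j, lam j * u j (X ω) :=
    Finset.measurable_sum _ fun j _ => ((hu j).comp hX).const_mul _
  have hgmeas : Measurable g := (he.comp hX).mul (Real.measurable_exp.comp hSmeas)
  set C : ℝ := exp (∑ j : Fin K, |lam j| * B) with hCdef
  have hexp_le : ∀ ω, exp (∑ j, lam j * u j (X ω)) ≤ C := by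
    intro ω
    apply exp_le_exp.2
    apply Finset.sum_le_sum
    intro j _
    calc lam j * u j (X ω) ≤ |lam j * u j (X ω)| := le_abs_self _
      _ = |lam j| * |u j (X ω)| := abs_mul _ _
      _ ≤ |lam j| * B := mul_le_mul_of_nonneg_left (hB j _) (abs_nonneg _)
  have hgbd : ∀ᵐ ω ∂μ, ‖g ω‖ ≤ C := by
    filter_upwards [hescore] with ω h
    rw [Real.norm_eq_abs, abs_of_pos (mul_pos h.1 (exp_pos _))]
    calc e (X ω) * exp (∑ j, lam j * u j (X ω)) ≤ 1 * C :=
          mul_le_mul h.2.le (hexp_le ω) (exp_pos _).le zero_le_one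
      _ = C := one_mul C
  have hgint : Integrable g μ :=
    ⟨hgmeas.aestronglyMeasurable, HasFiniteIntegral.of_bounded hgbd⟩
  have hgpos : ∀ᵐ ω ∂μ, 0 < g ω := by
    filter_upwards [hescore] with ω h using mul_pos h.1 (exp_pos _)
  have hZpos : 0 < Z := by
    rw [hZ, integral_pos_iff_support_of_nonneg_ae (hgpos.mono fun ω h => h.le) hgint]
    have h1 : μ (Function.support g)ᶜ = 0 := by
      refine measure_mono_null (fun ω hω => ?_) (ae_iff.1 hgpos)
      simp only [Set.mem_compl_iff, Function.mem_support, not_not] at hω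
      simp [hω]
    rw [pos_iff_ne_zero]
    intro h0
    have h2 : μ Set.univ ≤ 0 := by
      rw [← Set.union_compl_self (Function.support g)]
      exact le_trans (measure_union_le _ _) (by simp [h0, h1])
    simp [measure_univ] at h2
  have hZne : Z ≠ 0 := ne_of_gt hZpos
  -- integrability of u k ∘ X and g * (u k ∘ X)
  have huint : ∀ k, Integrable (fun ω => u k (X ω)) μ := fun k =>
    ⟨((hu k).comp hX).aestronglyMeasurable,
      HasFiniteIntegral.of_bounded (C := B) (ae_of_all _ fun ω => hB k (X ω))⟩
  have hguint : ∀ k, Integrable (fun ω => g ω * u k (X ω)) μ := fun k => by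
    refine ⟨(hgmeas.mul ((hu k).comp hX)).aestronglyMeasurable,
      HasFiniteIntegral.of_bounded (C := C * B) ?_⟩
    filter_upwards [hgbd] with ω h
    rw [Real.norm_eq_abs, abs_mul]
    exact mul_le_mul (by simpa using h) (hB k _) (abs_nonneg _)
      (le_trans (norm_nonneg _) h)
  -- key: ∫ g * u k = m k * Z
  have hkey : ∀ k, ∫ ω, g ω * u k (X ω) ∂μ = m k * Z := by
    intro k
    have h0 := hbal k
    have hexp : (fun ω => e (X ω) * exp (∑ j, lam j * u j (X ω)) * (u k (X ω) - m k))
        = fun ω => g ω * u k (X ω) - m k * g ω := by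
      funext ω; rw [hg]; ring
    rw [hexp] at h0
    rw [integral_sub (hguint k) ((hgint.const_mul (m k)))] at h0
    rw [integral_const_mul] at h0
    linarith
  -- the affine integrand
  have hgb1int : Integrable (fun ω => g ω * b1 (X ω)) μ := by
    refine Integrable.mono' (hb1int.norm.const_mul C)
      (hgmeas.aestronglyMeasurable.mul hb1int.aestronglyMeasurable) ?_
    filter_upwards [hgbd] with ω h
    rw [Real.norm_eq_abs, abs_mul]
    exact mul_le_mul_of_nonneg_right (by simpa using h) (abs_nonneg _)
  -- ∫ g * b1 = a0 * Z + ∑ a k * (m k * Z)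
  have hint_aff : Integrable (fun ω => g ω * (a0 + ∑ k, a k * u k (X ω))) μ := by
    have : (fun ω => g ω * (a0 + ∑ k, a k * u k (X ω)))
        = fun ω => a0 * g ω + ∑ k, a k * (g ω * u k (X ω)) := by
      funext ω
      rw [mul_add, Finset.mul_sum, mul_comm (g ω) a0]
      congr 1
      exact Finset.sum_congr rfl fun k _ => by ring
    rw [this]
    exact (hgint.const_mul a0).add
      (integrable_finset_sum _ fun k _ => (hguint k).const_mul (a k))
  have hmain : ∫ ω, g ω * b1 (X ω) ∂μ = a0 * Z + ∑ k, a k * (m k * Z) := by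
    have h1 : ∫ ω, g ω * b1 (X ω) ∂μ
        = ∫ ω, g ω * (a0 + ∑ k, a k * u k (X ω)) ∂μ := by
      refine integral_congr_ae ?_
      filter_upwards [haff] with ω h
      rw [h]
    rw [h1]
    have h2 : (fun ω => g ω * (a0 + ∑ k, a k * u k (X ω)))
        = fun ω => a0 * g ω + ∑ k, a k * (g ω * u k (X ω)) := by
      funext ω
      rw [mul_add, Finset.mul_sum, mul_comm (g ω) a0]
      congr 1
      exact Finset.sum_congr rfl fun k _ => by ring
    rw [h2, integral_add ((hgint.const_mul a0))
      (integrable_finset_sum _ fun k _ => (hguint k).const_mul (a k)),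
      integral_const_mul, integral_finset_sum _ fun k _ => (hguint k).const_mul (a k)]
    congr 1
    apply Finset.sum_congr rfl
    intro k _
    rw [integral_const_mul, hkey k]
  -- ∫ b1 = a0 + ∑ a k * m k
  have hb1val : ∫ ω, b1 (X ω) ∂μ = a0 + ∑ k, a k * m k := by
    rw [integral_congr_ae haff,
      integral_add (integrable_const a0)
        (integrable_finset_sum _ fun k _ => (huint k).const_mul (a k)),
      integral_const, integral_finset_sum _ fun k _ => (huint k).const_mul (a k)]
    simp only [measure_univ, ENNReal.toReal_one, probReal_univ, smul_eq_mul, one_mul]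
    congr 1
    apply Finset.sum_congr rfl
    intro k _
    rw [integral_const_mul, ← hm k]
  constructor
  · have hlhs : (fun ω => e (X ω) * wt (X ω) * b1 (X ω))
        = fun ω => (g ω * b1 (X ω)) / Z := by
      funext ω
      rw [hwt (X ω), hg]
      ring
    rw [hlhs, integral_div, hmain, hb1val]
    rw [eq_comm, eq_div_iff hZne, add_mul, Finset.sum_mul]
    congr 1
    exact Finset.sum_congr rfl fun k _ => by ring
  · rw [← integral_congr_ae hb1, integral_condExp (hX.comap_le)]
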